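/- arXiv:2302.06311 — 3 statements merged into one kernel-verified Lean document; each statement's English description precedes it below -/
import Mathlib

section
/- Bounded martingale differences of the ERW martingale: for every p ∈ (0, 1] and every k ≥ 1, |ΔM_k| ≤ 2 a_k almost surely, where ΔM_k = M_k − M_{k−1}. -/
open MeasureTheory ProbabilityTheory Filter Set
open scoped ENNReal

/-- The weights `aₙ = Γ(n)Γ(2p)/Γ(n+2p−1)` of the elephant random walk
(note that the formula also gives `a₁ = 1`). -/
noncomputable def erwA (p : ℝ) (n : ℕ) : ℝ :=
  Real.Gamma n * Real.Gamma (2 * p) / Real.Gamma ((n : ℝ) + 2 * p - 1)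

/-- The martingale `M₀ = 0`, `Mₙ = aₙTₙ − (2q−1)` where `Tₙ = Σ_{i=1}^n Xᵢ`. -/
noncomputable def erwM {Ω : Type*} (p q : ℝ) (X : ℕ → Ω → ℝ) (n : ℕ) (ω : Ω) : ℝ :=
  if n = 0 then 0 else erwA p n * (∑ i ∈ Finset.Icc 1 n, X i ω) - (2 * q - 1)

lemma erwA_pos {p : ℝ} (hp : 0 < p) {k : ℕ} (hk : 1 ≤ k) : 0 < erwA p k := by
  have h1 : (0:ℝ) < (k:ℝ) := by exact_mod_cast hk
  have h2 : (0:ℝ) < 2 * p := by linarith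
  have h3 : (0:ℝ) < (k:ℝ) + 2 * p - 1 := by
    have : (1:ℝ) ≤ (k:ℝ) := by exact_mod_cast hk
    linarith
  exact div_pos (mul_pos (Real.Gamma_pos_of_pos h1) (Real.Gamma_pos_of_pos h2))
    (Real.Gamma_pos_of_pos h3)

lemma erwA_one {p : ℝ} (hp : 0 < p) : erwA p 1 = 1 := by
  have h2 : (0:ℝ) < 2 * p := by linarith
  have : Real.Gamma ((1:ℕ) + 2 * p - 1) = Real.Gamma (2 * p) := by norm_num
  simp [erwA, this, Real.Gamma_one, ne_of_gt (Real.Gamma_pos_of_pos h2)]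

lemma erwA_rec {p : ℝ} (hp : 0 < p) {n : ℕ} (hn : 1 ≤ n) :
    (n : ℝ) * erwA p n = ((n : ℝ) + 2 * p - 1) * erwA p (n + 1) := by
  have h1 : (0:ℝ) < (n:ℝ) := by exact_mod_cast hn
  have h3 : (0:ℝ) < (n:ℝ) + 2 * p - 1 := by
    have : (1:ℝ) ≤ (n:ℝ) := by exact_mod_cast hn
    linarith
  have hg1 : Real.Gamma ((n:ℝ) + 1) = (n:ℝ) * Real.Gamma n := by
    rw [Real.Gamma_add_one (ne_of_gt h1)]
  have hg2 : Real.Gamma (((n:ℕ)+1 : ℕ) + 2 * p - 1) = ((n:ℝ) + 2*p - 1) * Real.Gamma ((n:ℝ) + 2 * p - 1) := by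
    have : (((n:ℕ)+1 : ℕ) : ℝ) + 2 * p - 1 = ((n:ℝ) + 2*p - 1) + 1 := by push_cast; ring
    rw [this, Real.Gamma_add_one (ne_of_gt h3)]
  have hG3 : Real.Gamma ((n:ℝ) + 2 * p - 1) ≠ 0 := ne_of_gt (Real.Gamma_pos_of_pos h3)
  have hG3' : ((n:ℝ) + 2*p - 1) * Real.Gamma ((n:ℝ) + 2 * p - 1) ≠ 0 :=
    mul_ne_zero (ne_of_gt h3) hG3
  unfold erwA
  rw [hg2]
  push_cast [hg1]
  field_simp

/-- If a random variable takes values `1` and `-1` with total probability `1`,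
then a.s. its absolute value is `1`. -/
lemma erw_abs_ae {Ω : Type} [MeasurableSpace Ω] (μ : Measure Ω) [IsProbabilityMeasure μ]
    {f : Ω → ℝ} (hf : Measurable f) {r : ℝ} (hr0 : 0 ≤ r) (hr1 : r ≤ 1)
    (h1 : μ {ω | f ω = 1} = ENNReal.ofReal r)
    (h2 : μ {ω | f ω = -1} = ENNReal.ofReal (1 - r)) :
    ∀ᵐ ω ∂μ, |f ω| = 1 := by
  set s : Set Ω := {ω | f ω = 1} ∪ {ω | f ω = -1} with hs
  have hm1 : MeasurableSet {ω | f ω = 1} := hf (measurableSet_singleton 1)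
  have hm2 : MeasurableSet {ω | f ω = -1} := hf (measurableSet_singleton (-1))
  have hdisj : Disjoint {ω | f ω = 1} {ω | f ω = -1} := by
    rw [Set.disjoint_left]
    intro ω hω1 hω2
    simp only [Set.mem_setOf_eq] at hω1 hω2
    norm_num [hω1] at hω2
  have hmu : μ s = 1 := by
    rw [hs, measure_union hdisj hm2, h1, h2,
      ← ENNReal.ofReal_add hr0 (by linarith)]
    norm_num
  have hcompl : μ sᶜ = 0 := by
    rw [measure_compl (hm1.union hm2) (measure_ne_top μ s), hmu, measure_univ]
    simp
  have : ∀ᵐ ω ∂μ, ω ∈ s := by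
    rw [ae_iff]
    convert hcompl using 2
    rfl
  filter_upwards [this] with ω hω
  rcases hω with h | h <;> simp_all

/-- Bounded martingale differences of the ERW martingale: for every `p ∈ (0, 1]` and every
`k ≥ 1`, `|ΔM_k| ≤ 2 a_k` almost surely, where `ΔM_k = M_k − M_{k−1}`. -/
theorem erw_martingale_diff_bounded
    {Ω : Type} [MeasurableSpace Ω] (μ : Measure Ω) [IsProbabilityMeasure μ]
    (p q : ℝ) (hp : p ∈ Set.Ioc (0 : ℝ) 1) (hq : q ∈ Set.Ioc (0 : ℝ) 1)
    (X A : ℕ → Ω → ℝ) (B : ℕ → Ω → ℕ)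
    (hXmeas : ∀ n, Measurable (X n)) (hAmeas : ∀ n, Measurable (A n))
    (hBmeas : ∀ n, Measurable (B n))
    (hX1 : μ {ω | X 1 ω = 1} = ENNReal.ofReal q)
    (hX1' : μ {ω | X 1 ω = -1} = ENNReal.ofReal (1 - q))
    (hA : ∀ n, 2 ≤ n → μ {ω | A n ω = 1} = ENNReal.ofReal p)
    (hA' : ∀ n, 2 ≤ n → μ {ω | A n ω = -1} = ENNReal.ofReal (1 - p))
    (hB : ∀ n, 2 ≤ n → ∀ k ∈ Finset.Icc 1 (n - 1),
      μ {ω | B n ω = k} = (((n - 1 : ℕ) : ℝ≥0∞))⁻¹)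
    (hXrec : ∀ n, 2 ≤ n → ∀ ω, X n ω = A n ω * X (B n ω) ω)
    (hindep : iIndep (Sum.elim (fun _ : Unit => MeasurableSpace.comap (X 1) inferInstance)
        (Sum.elim (fun k : ℕ => MeasurableSpace.comap (A (k + 2)) inferInstance)
          (fun k : ℕ => MeasurableSpace.comap (B (k + 2)) inferInstance))) μ) :
    ∀ k : ℕ, 1 ≤ k → ∀ᵐ ω ∂μ,
      |erwM p q X k ω - erwM p q X (k - 1) ω| ≤ 2 * erwA p k := by
  obtain ⟨hp0, hp1⟩ := hp
  obtain ⟨hq0, hq1⟩ := hq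
  -- a.s. the elephant steps have absolute value 1
  have hBrange : ∀ n, 2 ≤ n → ∀ᵐ ω ∂μ, B n ω ∈ Finset.Icc 1 (n - 1) := by
    intro n hn
    set s : Set Ω := ⋃ k ∈ Finset.Icc 1 (n-1), {ω | B n ω = k} with hsdef
    have hms : ∀ k : ℕ, MeasurableSet {ω | B n ω = k} :=
      fun k => (hBmeas n) (measurableSet_singleton k)
    have hmu : μ s = 1 := by
      rw [hsdef, measure_biUnion_finset ?_ (fun k _ => hms k)]
      · rw [Finset.sum_congr rfl (fun k hk => hB n hn k hk)]
        rw [Finset.sum_const, Nat.card_Icc]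
        have hne : ((n - 1 : ℕ) : ℝ≥0∞) ≠ 0 := by
          simp only [ne_eq, Nat.cast_eq_zero]
          omega
        simp only [Nat.add_sub_cancel, nsmul_eq_mul]
        rw [ENNReal.mul_inv_cancel hne (by simp)]
      · intro a ha b hb hab
        rw [Function.onFun, Set.disjoint_left]
        intro ω h1 h2
        simp only [Set.mem_setOf_eq] at h1 h2
        exact hab (h1 ▸ h2 ▸ rfl)
    have hcompl : μ sᶜ = 0 := by
      rw [measure_compl (by exact Finset.measurableSet_biUnion _ (fun k _ => hms k))
        (measure_ne_top μ s), hmu, measure_univ]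
      simp
    have : ∀ᵐ ω ∂μ, ω ∈ s := by
      rw [ae_iff]; convert hcompl using 2; rfl
    filter_upwards [this] with ω hω
    simp only [hsdef, Set.mem_iUnion, Set.mem_setOf_eq] at hω
    obtain ⟨k, hk, hck⟩ := hω
    exact hck ▸ hk
  have habs : ∀ n : ℕ, ∀ᵐ ω ∂μ, 1 ≤ n → |X n ω| = 1 := by
    intro n
    induction n using Nat.strong_induction_on with
    | _ n ih =>
      rcases Nat.lt_or_ge n 1 with h0 | h1
      · filter_upwards with ω hω; omega
      rcases Nat.lt_or_ge n 2 with hn1 | hn2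
      · have : n = 1 := by omega
        subst this
        filter_upwards [erw_abs_ae μ (hXmeas 1) hq0.le hq1 hX1 hX1'] with ω hω _
        exact hω
      · have hAabs : ∀ᵐ ω ∂μ, |A n ω| = 1 :=
          erw_abs_ae μ (hAmeas n) hp0.le hp1 (hA n hn2) (hA' n hn2)
        have ihall : ∀ᵐ ω ∂μ, ∀ m, m < n → 1 ≤ m → |X m ω| = 1 := by
          rw [ae_all_iff]
          intro m
          by_cases h : m < n
          · filter_upwards [ih m h] with ω hω _ hm; exact hω hm
          · filter_upwards with ω hm; exact absurd hm h
        filter_upwards [hAabs, ihall, hBrange n hn2] with ω hωA hωX hωB _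
        rw [hXrec n hn2 ω, abs_mul, hωA, one_mul]
        rw [Finset.mem_Icc] at hωB
        exact hωX _ (by omega) hωB.1
  -- main argument
  intro k hk
  have hE : ∀ᵐ ω ∂μ, ∀ i, i ∈ Finset.Icc 1 k → |X i ω| = 1 := by
    rw [ae_all_iff]
    intro i
    filter_upwards [habs i] with ω hω hi
    exact hω (Finset.mem_Icc.mp hi).1
  filter_upwards [hE] with ω hω
  rcases Nat.lt_or_ge k 2 with hk1 | hk2
  · -- k = 1
    have : k = 1 := by omega
    subst this
    simp only [erwM, Nat.sub_self]
    norm_num [erwA_one hp0]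
    have h1 : |X 1 ω| = 1 := hω 1 (by simp)
    have := abs_le.mp h1.le
    rw [abs_le]
    constructor <;> linarith [this.1, this.2]
  · -- k ≥ 2
    obtain ⟨n, rfl⟩ : ∃ n, k = n + 1 := ⟨k - 1, by omega⟩
    have hn1 : 1 ≤ n := by omega
    have hnn : (1:ℝ) ≤ (n:ℝ) := by exact_mod_cast hn1
    simp only [erwM, Nat.add_sub_cancel, Nat.succ_ne_zero, if_false]
    have hne : n ≠ 0 := by omega
    rw [if_neg hne]
    have hsum : ∑ i ∈ Finset.Icc 1 (n+1), X i ω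
        = (∑ i ∈ Finset.Icc 1 n, X i ω) + X (n+1) ω :=
      Finset.sum_Icc_succ_top (by omega) _
    set S := ∑ i ∈ Finset.Icc 1 n, X i ω with hS
    have hSb : |S| ≤ (n:ℝ) := by
      calc |S| ≤ ∑ i ∈ Finset.Icc 1 n, |X i ω| := Finset.abs_sum_le_sum_abs _ _
        _ = ∑ i ∈ Finset.Icc 1 n, 1 := by
            refine Finset.sum_congr rfl fun i hi => hω i ?_
            rw [Finset.mem_Icc] at hi ⊢; omega
        _ = (n:ℝ) := by rw [Finset.sum_const, Nat.card_Icc]; simp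
    have hx : |X (n+1) ω| = 1 := hω (n+1) (by rw [Finset.mem_Icc]; omega)
    have hrec := erwA_rec hp0 hn1
    set a := erwA p n with ha
    set b := erwA p (n+1) with hb
    have hbpos : 0 < b := erwA_pos hp0 (by omega)
    -- n * (b - a) = (1 - 2p) * b
    have hdiff : (n:ℝ) * (b - a) = (1 - 2*p) * b := by
      have : (n:ℝ) * a = ((n:ℝ) + 2*p - 1) * b := hrec
      nlinarith [this]
    have key : |(b - a) * S| ≤ |1 - 2*p| * b := by
      rcases eq_or_ne (b - a) 0 with h | h
      · rw [h, zero_mul, abs_zero]; positivity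
      have hnpos : (0:ℝ) < n := by linarith
      have h1 : |b - a| * (n:ℝ) = |1 - 2*p| * b := by
        have := congrArg abs hdiff
        rw [abs_mul, abs_mul, abs_of_nonneg hnpos.le, abs_of_nonneg hbpos.le] at this
        linarith [this]
      calc |(b - a) * S| = |b - a| * |S| := abs_mul _ _
        _ ≤ |b - a| * (n:ℝ) := by
            exact mul_le_mul_of_nonneg_left hSb (abs_nonneg _)
        _ = |1 - 2*p| * b := h1
    have habs2p : |1 - 2*p| ≤ 1 := by rw [abs_le]; constructor <;> linarith
    have hΔ : b * ((S + X (n+1) ω)) - (2*q-1) - (a * S - (2*q-1))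
        = b * X (n+1) ω + (b - a) * S := by ring
    rw [hsum, hΔ]
    calc |b * X (n+1) ω + (b - a) * S|
        ≤ |b * X (n+1) ω| + |(b - a) * S| := abs_add_le _ _
      _ ≤ b + |1 - 2*p| * b := by
          rw [abs_mul, hx, mul_one, abs_of_nonneg hbpos.le]
          exact add_le_add_right key _
      _ ≤ 2 * b := by nlinarith [habs2p, hbpos]
end

section
/- Asymptotics of the variance sequence in the diffusive regime: for every p ∈ (0, 3/4), lim_{n→∞} vₙ / n^{3−4p} = Γ(2p)² / (3−4p). -/
open MeasureTheory ProbabilityTheory Filter Set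

/-- `vₙ = Σ_{i=1}^n aᵢ²`. -/
noncomputable def erwV (p : ℝ) (n : ℕ) : ℝ :=
  ∑ i ∈ Finset.Icc 1 n, (erwA p i) ^ 2

section ErwAux

open Filter Set Finset Topology


lemma gamma_add_nat {x : ℝ} (hx : 0 < x) (n : ℕ) :
    Real.Gamma (x + n) = Real.Gamma x * ∏ j ∈ Finset.range n, (x + j) := by
  induction n with
  | zero => simp
  | succ n ih =>
      have hxn : x + (n : ℝ) ≠ 0 := by positivity
      have : (x + (n + 1 : ℕ) : ℝ) = (x + n) + 1 := by push_cast; ring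
      rw [this, Real.Gamma_add_one hxn, ih, Finset.prod_range_succ]
      ring

lemma erwA_succ (p : ℝ) (hp : 0 < p) (n : ℕ) :
    erwA p (n + 1) = (n.factorial : ℝ) / ∏ j ∈ Finset.range n, (2 * p + j) := by
  have h2p : 0 < 2 * p := by linarith
  have hG : Real.Gamma (2 * p) ≠ 0 := (Real.Gamma_pos_of_pos h2p).ne'
  have h1 : ((n + 1 : ℕ) : ℝ) + 2 * p - 1 = 2 * p + n := by push_cast; ring
  have h2 : ((n + 1 : ℕ) : ℝ) = (n : ℝ) + 1 := by push_cast; ring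
  rw [erwA, h1, gamma_add_nat h2p, h2, Real.Gamma_nat_eq_factorial]
  field_simp

lemma tendsto_erwA_div {p : ℝ} (hp : 0 < p) :
    Tendsto (fun n : ℕ => erwA p (n + 1) / (n : ℝ) ^ (1 - 2 * p)) atTop
      (𝓝 (Real.Gamma (2 * p))) := by
  have h2 : Tendsto (fun n : ℕ => (2 * p + n) / n) atTop (𝓝 1) := by
    have h0 : Tendsto (fun n : ℕ => 2 * p / n + 1) atTop (𝓝 (0 + 1)) :=
      (tendsto_const_div_atTop_nhds_zero_nat (2 * p)).add tendsto_const_nhds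
    rw [zero_add] at h0
    apply h0.congr'
    filter_upwards [eventually_ge_atTop 1] with n hn
    have hn0 : (0:ℝ) < n := by exact_mod_cast hn
    field_simp
  have h1 : Tendsto (fun n : ℕ => Real.GammaSeq (2 * p) n * ((2 * p + n) / n)) atTop
      (𝓝 (Real.Gamma (2 * p) * 1)) := (Real.GammaSeq_tendsto_Gamma (2 * p)).mul h2
  rw [mul_one] at h1
  apply h1.congr'
  filter_upwards [eventually_ge_atTop 1] with n hn
  have hn0 : (0:ℝ) < n := by exact_mod_cast hn
  have hP : (0:ℝ) < ∏ j ∈ Finset.range n, (2 * p + j) :=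
    Finset.prod_pos (fun j _ => by positivity)
  have hrp : (n:ℝ) ^ (1 - 2 * p) * (n:ℝ) ^ (2 * p) = n := by
    rw [← Real.rpow_add hn0]; norm_num
  have h2pn : (0:ℝ) < 2 * p + n := by positivity
  have hB : (0:ℝ) < (n:ℝ) ^ (1 - 2 * p) := Real.rpow_pos_of_pos hn0 _
  rw [erwA_succ p hp, Real.GammaSeq, Finset.prod_range_succ]
  have hPne : (∏ j ∈ Finset.range n, (2 * p + (j:ℝ))) ≠ 0 := hP.ne'
  field_simp
  linear_combination hrp

lemma tendsto_gdiff {s : ℝ} (hs : 0 < s) :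
    Tendsto (fun n : ℕ => (((n : ℝ) + 1) ^ s - (n : ℝ) ^ s) / (n : ℝ) ^ (s - 1)) atTop
      (𝓝 s) := by
  have hderiv : HasDerivAt (fun x : ℝ => x ^ s) (s * (1 : ℝ) ^ (s - 1)) 1 :=
    Real.hasDerivAt_rpow_const (Or.inl one_ne_zero)
  rw [Real.one_rpow, mul_one] at hderiv
  have hslope := hasDerivAt_iff_tendsto_slope.mp hderiv
  have hseq : Tendsto (fun n : ℕ => 1 + 1 / (n : ℝ)) atTop (nhdsWithin 1 {(1:ℝ)}ᶜ) := by
    rw [tendsto_nhdsWithin_iff]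
    constructor
    · have := tendsto_one_div_atTop_nhds_zero_nat (𝕜 := ℝ)
      simpa using (tendsto_const_nhds (x := (1:ℝ))).add this
    · filter_upwards [eventually_ge_atTop 1] with n hn
      have hn0 : (0:ℝ) < n := by exact_mod_cast hn
      simp only [Set.mem_compl_iff, Set.mem_singleton_iff]
      intro h
      have : 1 / (n:ℝ) = 0 := by linarith
      simp at this
      linarith
  have hcomp := hslope.comp hseq
  apply hcomp.congr'
  filter_upwards [eventually_ge_atTop 1] with n hn
  have hn0 : (0:ℝ) < n := by exact_mod_cast hn
  have hxs : (n:ℝ) ^ (s - 1) * n = (n:ℝ) ^ s := by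
    nth_rewrite 2 [← Real.rpow_one (n:ℝ)]
    rw [← Real.rpow_add hn0]
    ring_nf
  have hdiv : (1 + 1 / (n:ℝ)) ^ s = ((n:ℝ) + 1) ^ s / (n:ℝ) ^ s := by
    rw [← Real.div_rpow (by positivity) hn0.le]
    congr 1
    field_simp
  simp only [Function.comp_apply, slope_def_field, Real.one_rpow]
  rw [hdiv]
  have hns : (0:ℝ) < (n:ℝ) ^ s := Real.rpow_pos_of_pos hn0 _
  have hns1 : (0:ℝ) < (n:ℝ) ^ (s-1) := Real.rpow_pos_of_pos hn0 _
  set A := (n:ℝ) ^ s with hA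
  set B := (n:ℝ) ^ (s-1) with hB
  set C := ((n:ℝ) + 1) ^ s with hC
  field_simp
  linear_combination (C - A) * hxs

theorem erw_v_asymptotics_diffusive' (p : ℝ) (hp : p ∈ Set.Ioo (0 : ℝ) (3 / 4)) :
    Tendsto (fun n : ℕ => (∑ i ∈ Finset.Icc 1 n, (erwA p i) ^ 2) / (n : ℝ) ^ (3 - 4 * p)) atTop
      (nhds (Real.Gamma (2 * p) ^ 2 / (3 - 4 * p))) := by
  obtain ⟨hp0, hp34⟩ := hp
  set s : ℝ := 3 - 4 * p with hsdef
  have hs : 0 < s := by rw [hsdef]; linarith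
  set L : ℝ := Real.Gamma (2 * p) ^ 2 / s with hLdef
  set b : ℕ → ℝ := fun n => erwA p (n + 1) ^ 2 with hbdef
  set g : ℕ → ℝ := fun n => ((n : ℝ) + 1) ^ s - (n : ℝ) ^ s with hgdef
  have hgpos : ∀ n, 0 < g n := by
    intro n
    have h1 : ((n:ℝ)) < (n:ℝ) + 1 := by linarith
    exact sub_pos.mpr (Real.rpow_lt_rpow (Nat.cast_nonneg n) h1 hs)
  have hsum_g : ∀ n, ∑ i ∈ Finset.range n, g i = (n : ℝ) ^ s := by
    intro n
    have h := Finset.sum_range_sub (fun i : ℕ => ((i : ℝ)) ^ s) n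
    simp only [hgdef]
    rw [show (fun i : ℕ => ((i:ℝ)+1)^s - (i:ℝ)^s)
        = fun i : ℕ => (fun j : ℕ => ((j:ℝ))^s) (i+1) - (fun j : ℕ => ((j:ℝ))^s) i by
      funext i; push_cast; ring_nf]
    rw [h]
    simp [Real.zero_rpow hs.ne']
  have hsum_v : ∀ n, ∑ i ∈ Finset.Icc 1 n, (erwA p i) ^ 2 = ∑ i ∈ Finset.range n, b i := by
    intro n
    rw [show Finset.Icc 1 n = Finset.Ico 1 (n+1) by rfl, Finset.sum_Ico_eq_sum_range]
    simp [hbdef, add_comm]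
  have hb_lim : Tendsto (fun n => b n / (n : ℝ) ^ (s - 1)) atTop
      (𝓝 (Real.Gamma (2 * p) ^ 2)) := by
    have h := (tendsto_erwA_div hp0).mul (tendsto_erwA_div hp0)
    rw [← sq] at h
    apply h.congr'
    filter_upwards [eventually_ge_atTop 1] with n hn
    have hn0 : (0:ℝ) < n := by exact_mod_cast hn
    have hexp : ((n:ℝ) ^ (1 - 2 * p)) ^ 2 = (n:ℝ) ^ (s - 1) := by
      rw [← Real.rpow_natCast ((n:ℝ) ^ (1 - 2 * p)) 2, ← Real.rpow_mul hn0.le]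
      norm_num
      ring_nf
      rw [hsdef]
      ring_nf
    show _ = erwA p (n + 1) ^ 2 / (n:ℝ) ^ (s - 1)
    rw [← hexp, ← div_pow, sq]
  have hg_lim : Tendsto (fun n => g n / (n : ℝ) ^ (s - 1)) atTop (𝓝 s) := tendsto_gdiff hs
  have hbg : Tendsto (fun n => b n / g n) atTop (𝓝 L) := by
    have h := hb_lim.div hg_lim hs.ne'
    rw [← hLdef] at h
    apply h.congr'
    filter_upwards [eventually_ge_atTop 1] with n hn
    have hn0 : (0:ℝ) < n := by exact_mod_cast hn
    have h1 : (n:ℝ) ^ (s - 1) ≠ 0 := (Real.rpow_pos_of_pos hn0 _).ne'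
    simp only [Pi.div_apply]
    field_simp
  have hf : (fun n => b n - L * g n) =o[atTop] g := by
    rw [Asymptotics.isLittleO_iff_tendsto' (by
      filter_upwards with n hgn; exact absurd hgn (hgpos n).ne')]
    have h := hbg.sub (tendsto_const_nhds (x := L))
    rw [sub_self] at h
    apply h.congr
    intro n
    rw [sub_div, mul_div_assoc, div_self (hgpos n).ne', mul_one]
  have hg_top : Tendsto (fun n => ∑ i ∈ Finset.range n, g i) atTop atTop := by
    have h := (tendsto_rpow_atTop hs).comp tendsto_natCast_atTop_atTop
    apply h.congr
    intro n
    rw [hsum_g]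
    rfl
  have hsum := hf.sum_range (fun n => (hgpos n).le) hg_top
  have hsum' : (fun n : ℕ => (∑ i ∈ Finset.Icc 1 n, (erwA p i) ^ 2) - L * (n:ℝ) ^ s)
      =o[atTop] fun n : ℕ => (n : ℝ) ^ s := by
    have e1 : ∀ n : ℕ, ∑ i ∈ Finset.range n, (b i - L * g i)
        = (∑ i ∈ Finset.Icc 1 n, (erwA p i) ^ 2) - L * (n:ℝ) ^ s := by
      intro n
      rw [Finset.sum_sub_distrib, ← Finset.mul_sum, hsum_g, hsum_v]
    calc (fun n : ℕ => (∑ i ∈ Finset.Icc 1 n, (erwA p i) ^ 2) - L * (n:ℝ) ^ s)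
        = fun n : ℕ => ∑ i ∈ Finset.range n, (b i - L * g i) := by funext n; rw [e1]
      _ =o[atTop] fun n : ℕ => ∑ i ∈ Finset.range n, g i := hsum
      _ = fun n : ℕ => (n : ℝ) ^ s := by funext n; rw [hsum_g]
  have h0 := hsum'.tendsto_div_nhds_zero
  have h1 := h0.add (tendsto_const_nhds (x := L))
  rw [zero_add] at h1
  apply h1.congr'
  filter_upwards [eventually_ge_atTop 1] with n hn
  have hn0 : (0:ℝ) < n := by exact_mod_cast hn
  have hns : (n:ℝ) ^ s ≠ 0 := (Real.rpow_pos_of_pos hn0 _).ne'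
  field_simp
  ring

end ErwAux


/-- Asymptotics of the variance sequence in the diffusive regime: for every `p ∈ (0, 3/4)`,
`lim_{n→∞} vₙ / n^{3−4p} = Γ(2p)² / (3−4p)`. -/
theorem erw_v_asymptotics_diffusive (p : ℝ) (hp : p ∈ Set.Ioo (0 : ℝ) (3 / 4)) :
    Tendsto (fun n : ℕ => erwV p n / (n : ℝ) ^ (3 - 4 * p)) atTop
      (nhds (Real.Gamma (2 * p) ^ 2 / (3 - 4 * p))) := by
  simpa [erwV] using erw_v_asymptotics_diffusive' p hp
end

section
/- Asymptotics of the variance sequence in the critical regime: for p = 3/4, lim_{n→∞} vₙ / log n = π/4. -/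
open MeasureTheory ProbabilityTheory Filter Set

open Real Stirling

lemma erwA_one_s18 : erwA (3/4) 1 = 1 := by
  unfold erwA
  norm_num
  exact (Real.Gamma_pos_of_pos (s := 3/2) (by norm_num)).ne'

lemma erwA_pos_s18 {n : ℕ} (hn : 1 ≤ n) : 0 < erwA (3/4) n := by
  unfold erwA
  have h1 : (0:ℝ) < n := by exact_mod_cast hn
  have : (0:ℝ) < (n:ℝ) + 2 * (3/4) - 1 := by linarith
  positivity

lemma erwA_succ_s18 (n : ℕ) (hn : 1 ≤ n) :
    erwA (3/4) (n+1) = erwA (3/4) n * ((n : ℝ) / ((n : ℝ) + 1/2)) := by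
  have h1 : (0:ℝ) < n := by exact_mod_cast hn
  have h2 : ((n:ℝ) + 1/2) ≠ 0 := by linarith
  have hG : Real.Gamma ((n:ℝ) + 1/2) ≠ 0 := (Real.Gamma_pos_of_pos (by linarith)).ne'
  unfold erwA
  push_cast
  rw [show ((n:ℝ) + 1 + 2 * (3/4) - 1) = ((n:ℝ) + 1/2) + 1 by ring,
      show ((n:ℝ) + 2 * (3/4) - 1) = ((n:ℝ) + 1/2) by ring,
      Real.Gamma_add_one h2, Real.Gamma_add_one h1.ne']
  field_simp

lemma erwA_eq_factorial (n : ℕ) (hn : 1 ≤ n) :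
    erwA (3/4) n = 4^n * ((n-1).factorial : ℝ) * (n.factorial : ℝ) / (2 * ((2*n).factorial : ℝ)) := by
  induction n, hn using Nat.le_induction with
  | base => rw [erwA_one_s18]; norm_num [Nat.factorial]
  | succ n hn ih =>
    have hn0 : ((n:ℝ)) ≠ 0 := by
      have : (0:ℝ) < n := by exact_mod_cast hn
      exact this.ne'
    have hpred : ((n-1).factorial : ℝ) = (n.factorial : ℝ) / n := by
      rw [eq_div_iff hn0, mul_comm]
      exact_mod_cast Nat.mul_factorial_pred (by omega : n ≠ 0)
    rw [erwA_succ_s18 n hn, ih, hpred]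
    have h2 : ((n:ℝ) + 1/2) ≠ 0 := by positivity
    have hfs : (2*(n+1)).factorial = (2*n+2) * ((2*n+1) * (2*n).factorial) := by
      rw [show 2*(n+1) = (2*n+1)+1 by ring, Nat.factorial_succ, Nat.factorial_succ]
    rw [hfs, show (n+1) - 1 = n from rfl, Nat.factorial_succ]
    have hf : ((2*n).factorial : ℝ) ≠ 0 := by positivity
    push_cast
    field_simp
    ring

lemma stirling_sq (m : ℕ) :
    stirlingSeq m ^ 2 = (m.factorial : ℝ)^2 / ((2*m) * (((m:ℝ)/Real.exp 1)^m)^2) := by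
  rw [stirlingSeq, div_pow, mul_pow, Real.sq_sqrt (by positivity)]

lemma ratio_eq (n : ℕ) (hn : 1 ≤ n) :
    (stirlingSeq n ^ 2 / stirlingSeq (2*n)) ^ 2
      = 16^n * (n.factorial : ℝ)^4 / ((n:ℝ) * (((2*n).factorial : ℝ))^2) := by
  have hn0 : (0:ℝ) < n := by exact_mod_cast hn
  have hX : (0:ℝ) < ((n:ℝ)/Real.exp 1)^n := by positivity
  rw [div_pow, stirling_sq, stirling_sq]
  have hY : (((2*n : ℕ):ℝ)/Real.exp 1)^(2*n) = 2^(2*n) * (((n:ℝ)/Real.exp 1)^n)^2 := by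
    push_cast
    rw [mul_div_assoc, mul_pow, ← pow_mul, show n*2 = 2*n by ring]
  rw [hY]
  have h16 : (16:ℝ)^n = ((2:ℝ)^(2*n))^2 := by
    rw [← pow_mul]
    rw [show 2*n*2 = 4*n by ring, pow_mul]
    norm_num
  rw [h16]
  have h2 : ((2:ℝ)^(2*n)) ≠ 0 := by positivity
  have hf : ((2*n).factorial : ℝ) ≠ 0 := by positivity
  push_cast
  field_simp

lemma key_identity (n : ℕ) (hn : 1 ≤ n) :
    (n:ℝ) * (erwA (3/4) n)^2 = (stirlingSeq n ^ 2 / stirlingSeq (2*n)) ^ 2 / 4 := by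
  have hn0 : ((n:ℝ)) ≠ 0 := by
    have : (0:ℝ) < n := by exact_mod_cast hn
    exact this.ne'
  have hpred : ((n-1).factorial : ℝ) = (n.factorial : ℝ) / n := by
    rw [eq_div_iff hn0, mul_comm]
    exact_mod_cast Nat.mul_factorial_pred (by omega : n ≠ 0)
  rw [ratio_eq n hn, erwA_eq_factorial n hn, hpred]
  have hf : ((2*n).factorial : ℝ) ≠ 0 := by positivity
  have h16 : (16:ℝ)^n = ((4:ℝ)^n)^2 := by
    rw [← pow_mul, show n*2 = 2*n by ring, pow_mul]
    norm_num
  rw [h16]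
  field_simp
  ring

lemma tendsto_mul_sq :
    Tendsto (fun n : ℕ => (n:ℝ) * (erwA (3/4) n)^2) atTop (nhds (π/4)) := by
  have hs : Tendsto stirlingSeq atTop (nhds (Real.sqrt π)) := tendsto_stirlingSeq_sqrt_pi
  have h2n : Tendsto (fun n : ℕ => 2*n) atTop atTop :=
    tendsto_atTop_atTop.mpr fun b => ⟨b, fun a ha => by omega⟩
  have hs2 : Tendsto (fun n : ℕ => stirlingSeq (2*n)) atTop (nhds (Real.sqrt π)) :=
    hs.comp h2n
  have hne : Real.sqrt π ≠ 0 := by positivity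
  have hlim : Tendsto (fun n : ℕ => (stirlingSeq n ^ 2 / stirlingSeq (2*n)) ^ 2 / 4) atTop
      (nhds (((Real.sqrt π ^ 2 / Real.sqrt π) ^ 2) / 4)) :=
    (((hs.pow 2).div hs2 hne).pow 2).div_const 4
  have hval : ((Real.sqrt π ^ 2 / Real.sqrt π) ^ 2) / 4 = π/4 := by
    rw [Real.sq_sqrt Real.pi_pos.le, div_pow, Real.sq_sqrt Real.pi_pos.le, sq,
      mul_div_assoc, div_self Real.pi_pos.ne', mul_one]
  rw [hval] at hlim
  refine hlim.congr' ?_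
  filter_upwards [eventually_ge_atTop 1] with n hn
  exact (key_identity n hn).symm

lemma mul_sq_anti {n m : ℕ} (hn : 1 ≤ n) (hm : n ≤ m) :
    (m:ℝ) * (erwA (3/4) m)^2 ≤ (n:ℝ) * (erwA (3/4) n)^2 := by
  induction m, hm using Nat.le_induction with
  | base => exact le_rfl
  | succ m hm ih =>
    refine le_trans ?_ ih
    have hm1 : 1 ≤ m := le_trans hn hm
    have hmr : (1:ℝ) ≤ m := by exact_mod_cast hm1
    have ha : 0 < erwA (3/4) m := erwA_pos_s18 hm1
    rw [erwA_succ_s18 m hm1]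
    have h2 : (0:ℝ) < (m:ℝ) + 1/2 := by linarith
    have h2' : ((m:ℝ) + 1/2) ≠ 0 := h2.ne'
    have key : ((m:ℝ)+1) * (m:ℝ)^2 ≤ (m:ℝ) * ((m:ℝ)+1/2)^2 := by nlinarith
    push_cast
    calc ((m:ℝ)+1) * (erwA (3/4) m * ((m:ℝ)/((m:ℝ)+1/2)))^2
        = (((m:ℝ)+1) * (m:ℝ)^2) * ((erwA (3/4) m)^2 / ((m:ℝ)+1/2)^2) := by
          field_simp
      _ ≤ ((m:ℝ) * ((m:ℝ)+1/2)^2) * ((erwA (3/4) m)^2 / ((m:ℝ)+1/2)^2) := by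
          apply mul_le_mul_of_nonneg_right key
          positivity
      _ = (m:ℝ) * (erwA (3/4) m)^2 := by
          field_simp

lemma mul_sq_mono {n m : ℕ} (hn : 1 ≤ n) (hm : n ≤ m) :
    ((n:ℝ) - 1/4) * (erwA (3/4) n)^2 ≤ ((m:ℝ) - 1/4) * (erwA (3/4) m)^2 := by
  induction m, hm using Nat.le_induction with
  | base => exact le_rfl
  | succ m hm ih =>
    refine le_trans ih ?_
    have hm1 : 1 ≤ m := le_trans hn hm
    have hmr : (1:ℝ) ≤ m := by exact_mod_cast hm1
    have ha : 0 < erwA (3/4) m := erwA_pos_s18 hm1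
    rw [erwA_succ_s18 m hm1]
    have h2 : (0:ℝ) < (m:ℝ) + 1/2 := by linarith
    have h2' : ((m:ℝ) + 1/2) ≠ 0 := h2.ne'
    have key : ((m:ℝ) - 1/4) * ((m:ℝ)+1/2)^2 ≤ ((m:ℝ) + 3/4) * (m:ℝ)^2 := by nlinarith
    push_cast
    calc ((m:ℝ) - 1/4) * (erwA (3/4) m)^2
        = (((m:ℝ) - 1/4) * ((m:ℝ)+1/2)^2) * ((erwA (3/4) m)^2 / ((m:ℝ)+1/2)^2) := by
          field_simp
      _ ≤ (((m:ℝ) + 3/4) * (m:ℝ)^2) * ((erwA (3/4) m)^2 / ((m:ℝ)+1/2)^2) := by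
          apply mul_le_mul_of_nonneg_right key
          positivity
      _ = ((m:ℝ) + 1 - 1/4) * (erwA (3/4) m * ((m:ℝ)/((m:ℝ)+1/2)))^2 := by
          field_simp
          ring

lemma tendsto_shift_mul_sq :
    Tendsto (fun n : ℕ => ((n:ℝ) - 1/4) * (erwA (3/4) n)^2) atTop (nhds (π/4)) := by
  have hsq0 : Tendsto (fun n : ℕ => (erwA (3/4) n)^2) atTop (nhds 0) := by
    have h := tendsto_mul_sq.mul tendsto_inv_atTop_nhds_zero_nat
    rw [mul_zero] at h
    refine h.congr' ?_
    filter_upwards [eventually_ge_atTop 1] with n hn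
    have hn0 : ((n:ℝ)) ≠ 0 := by
      have : (0:ℝ) < n := by exact_mod_cast hn
      exact this.ne'
    field_simp
  have h := tendsto_mul_sq.sub (hsq0.const_mul (1/4 : ℝ))
  rw [mul_zero, sub_zero] at h
  refine h.congr fun n => ?_
  ring

lemma lower_bound {n : ℕ} (hn : 1 ≤ n) : π/4 ≤ (n:ℝ) * (erwA (3/4) n)^2 := by
  refine le_of_tendsto tendsto_mul_sq ?_
  filter_upwards [eventually_ge_atTop n] with m hm
  exact mul_sq_anti hn hm

lemma upper_bound {n : ℕ} (hn : 1 ≤ n) : ((n:ℝ) - 1/4) * (erwA (3/4) n)^2 ≤ π/4 := by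
  refine ge_of_tendsto tendsto_shift_mul_sq ?_
  filter_upwards [eventually_ge_atTop n] with m hm
  exact mul_sq_mono hn hm

lemma term_lower {i : ℕ} (hi : 1 ≤ i) : π/4 * (1/(i:ℝ)) ≤ (erwA (3/4) i)^2 := by
  have hi0 : (0:ℝ) < i := by exact_mod_cast hi
  rw [mul_one_div, div_le_iff₀ hi0, mul_comm]
  exact lower_bound hi

lemma term_upper {i : ℕ} (hi : 1 ≤ i) :
    (erwA (3/4) i)^2 ≤ π/4 * (1/(i:ℝ) + 1/(i:ℝ)^2) := by
  have hi0 : (0:ℝ) < i := by exact_mod_cast hi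
  have hi1 : (1:ℝ) ≤ i := by exact_mod_cast hi
  have hu := upper_bound hi
  have ha : (0:ℝ) ≤ (erwA (3/4) i)^2 := sq_nonneg _
  rw [show π/4 * (1/(i:ℝ) + 1/(i:ℝ)^2) = π * ((i:ℝ)+1) / (4*(i:ℝ)^2) by field_simp,
    le_div_iff₀ (by positivity)]
  nlinarith [mul_le_mul_of_nonneg_left hu (show (0:ℝ) ≤ 4*(i:ℝ) by positivity),
    mul_nonneg ha (show (0:ℝ) ≤ 3*(i:ℝ) - 1 by linarith)]

lemma sum_inv_sq_le (n : ℕ) (hn : 1 ≤ n) :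
    (∑ i ∈ Finset.Icc 1 n, 1/((i:ℝ))^2) ≤ 2 - 1/(n:ℝ) := by
  induction n, hn using Nat.le_induction with
  | base => norm_num
  | succ n hn ih =>
    rw [Finset.sum_Icc_succ_top (by omega : 1 ≤ n + 1)]
    have hn0 : (0:ℝ) < n := by exact_mod_cast hn
    have h1 : 1/((n:ℝ)+1)^2 ≤ 1/(n:ℝ) - 1/((n:ℝ)+1) := by
      rw [div_sub_div _ _ hn0.ne' (by positivity : ((n:ℝ)+1) ≠ 0)]
      rw [div_le_div_iff₀ (by positivity) (by positivity)]
      nlinarith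
    push_cast
    linarith

lemma harmonic_eq (n : ℕ) :
    (∑ i ∈ Finset.Icc 1 n, 1/((i:ℝ))) = (harmonic n : ℝ) := by
  rw [harmonic_eq_sum_Icc]
  push_cast
  simp [one_div]

lemma v_lower (n : ℕ) : π/4 * (harmonic n : ℝ) ≤ erwV (3/4) n := by
  rw [← harmonic_eq, Finset.mul_sum]
  unfold erwV
  apply Finset.sum_le_sum
  intro i hi
  exact term_lower (Finset.mem_Icc.mp hi).1

lemma v_upper (n : ℕ) (hn : 1 ≤ n) : erwV (3/4) n ≤ π/4 * ((harmonic n : ℝ) + 2) := by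
  have h1 : erwV (3/4) n ≤ ∑ i ∈ Finset.Icc 1 n, (π/4 * (1/(i:ℝ)) + π/4 * (1/(i:ℝ)^2)) := by
    unfold erwV
    apply Finset.sum_le_sum
    intro i hi
    rw [← mul_add]
    exact term_upper (Finset.mem_Icc.mp hi).1
  rw [Finset.sum_add_distrib, ← Finset.mul_sum, ← Finset.mul_sum, harmonic_eq] at h1
  have h2 := sum_inv_sq_le n hn
  have hn0 : (0:ℝ) < n := by exact_mod_cast hn
  nlinarith [Real.pi_pos, one_div_pos.mpr hn0]

/-- Asymptotics of the variance sequence in the critical regime `p = 3/4`: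
`lim_{n→∞} vₙ / log n = π/4`. -/
theorem erw_v_asymptotics_critical :
    Tendsto (fun n : ℕ => erwV (3 / 4) n / Real.log n) atTop
      (nhds (Real.pi / 4)) := by
  have hlog : Tendsto (fun n : ℕ => Real.log n) atTop atTop :=
    Real.tendsto_log_atTop.comp tendsto_natCast_atTop_atTop
  have hH : Tendsto (fun n : ℕ => ((harmonic n : ℝ) - Real.log n) / Real.log n) atTop (nhds 0) :=
    Real.tendsto_harmonic_sub_log.div_atTop hlog
  have hq : Tendsto (fun n : ℕ => (harmonic n : ℝ) / Real.log n) atTop (nhds 1) := by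
    have h := hH.add tendsto_const_nhds (b := (1:ℝ))
    rw [zero_add] at h
    refine h.congr' ?_
    filter_upwards [eventually_ge_atTop 2] with n hn
    have hl : 0 < Real.log n := Real.log_pos (by exact_mod_cast hn)
    field_simp
    ring
  have hq2 : Tendsto (fun n : ℕ => ((harmonic n : ℝ) + 2) / Real.log n) atTop (nhds 1) := by
    have h := hq.add ((tendsto_const_nhds (x := (2:ℝ)) (f := atTop)).div_atTop hlog)
    rw [add_zero] at h
    refine h.congr fun n => ?_
    rw [add_div]
  have hlo : Tendsto (fun n : ℕ => π/4 * (harmonic n : ℝ) / Real.log n) atTop (nhds (π/4)) := by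
    have h := hq.const_mul (π/4)
    rw [mul_one] at h
    refine h.congr fun n => ?_
    rw [mul_div_assoc]
  have hhi : Tendsto (fun n : ℕ => π/4 * ((harmonic n : ℝ) + 2) / Real.log n) atTop
      (nhds (π/4)) := by
    have h := hq2.const_mul (π/4)
    rw [mul_one] at h
    refine h.congr fun n => ?_
    rw [mul_div_assoc]
  refine tendsto_of_tendsto_of_tendsto_of_le_of_le' hlo hhi ?_ ?_
  · filter_upwards [eventually_ge_atTop 2] with n hn
    have hl : 0 < Real.log n := Real.log_pos (by exact_mod_cast hn)
    exact div_le_div_of_nonneg_right (v_lower n) hl.le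
  · filter_upwards [eventually_ge_atTop 2] with n hn
    have hl : 0 < Real.log n := Real.log_pos (by exact_mod_cast hn)
    exact div_le_div_of_nonneg_right (v_upper n (by omega)) hl.le
end
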